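/- Let E be a CPTP map on the d×d complex matrices which admits a positive-definite fixed point ρ (a positive-definite density matrix with E(ρ) = ρ). Then fix(E) = ρ^{1/2} · fix(E†) · ρ^{1/2}: a matrix X satisfies E(X) = X if and only if X = ρ^{1/2} Y ρ^{1/2} for some matrix Y with E†(Y) = Y, where ρ^{1/2} is the positive-definite square root of ρ. -/

import Mathlib

open Matrix
open scoped ComplexOrder

/-- The square root of a positive semidefinite matrix, as `Matrix.PosSemidef.sqrt` was defined
in the older Mathlib (removed since). -/
noncomputable def Matrix.PosSemidef.sqrt {n 𝕜 : Type*} [Fintype n] [DecidableEq n] [RCLike 𝕜]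
    {A : Matrix n n 𝕜} (hA : A.PosSemidef) : Matrix n n 𝕜 :=
  (hA.1.eigenvectorUnitary : Matrix n n 𝕜) * diagonal ((↑) ∘ Real.sqrt ∘ hA.1.eigenvalues) *
    (star hA.1.eigenvectorUnitary : Matrix n n 𝕜)

lemma Matrix.PosSemidef.sqrt_mul_self {d : ℕ} {A : Matrix (Fin d) (Fin d) ℂ}
    (hA : A.PosSemidef) : hA.sqrt * hA.sqrt = A := by
  have hU : (star hA.1.eigenvectorUnitary : Matrix (Fin d) (Fin d) ℂ) *
      (hA.1.eigenvectorUnitary : Matrix (Fin d) (Fin d) ℂ) = 1 :=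
    (Matrix.mem_unitaryGroup_iff').mp hA.1.eigenvectorUnitary.2
  have hspec := hA.1.spectral_theorem
  rw [Unitary.conjStarAlgAut_apply] at hspec
  have hD : diagonal (((↑) ∘ Real.sqrt ∘ hA.1.eigenvalues : Fin d → ℂ)) *
      diagonal ((↑) ∘ Real.sqrt ∘ hA.1.eigenvalues) =
      diagonal (RCLike.ofReal ∘ hA.1.eigenvalues) := by
    rw [diagonal_mul_diagonal]
    congr 1
    funext i
    simp only [Function.comp_apply]
    rw [← Complex.ofReal_mul, Real.mul_self_sqrt (hA.eigenvalues_nonneg i)]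
    rfl
  unfold Matrix.PosSemidef.sqrt
  conv_rhs => rw [hspec]
  rw [← hD]
  simp only [Matrix.mul_assoc]
  rw [← Matrix.mul_assoc (star _ : Matrix (Fin d) (Fin d) ℂ), hU, Matrix.one_mul]
  rfl

lemma Matrix.PosSemidef.sqrt_conjTranspose' {d : ℕ} {A : Matrix (Fin d) (Fin d) ℂ}
    (hA : A.PosSemidef) : hA.sqrtᴴ = hA.sqrt := by
  unfold Matrix.PosSemidef.sqrt
  rw [conjTranspose_mul, conjTranspose_mul, diagonal_conjTranspose]
  have : star ((RCLike.ofReal ∘ Real.sqrt ∘ hA.1.eigenvalues : Fin d → ℂ)) =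
      (RCLike.ofReal ∘ Real.sqrt ∘ hA.1.eigenvalues) := by
    funext i; simp
  rw [this, ← star_eq_conjTranspose, ← star_eq_conjTranspose, star_star, Matrix.mul_assoc]


section Analytic
variable {d m : ℕ} {ρ : Matrix (Fin d) (Fin d) ℂ}

lemma trace_sq (d : ℕ) (B : Matrix (Fin d) (Fin d) ℂ) :
    trace (B * Bᴴ) = ((∑ i, ∑ j, Complex.normSq (B i j) : ℝ) : ℂ) := by
  simp [Matrix.trace, Matrix.mul_apply, Matrix.diag, Complex.mul_conj]

lemma trace_nonneg' (d : ℕ) (B : Matrix (Fin d) (Fin d) ℂ) : 0 ≤ trace (B * Bᴴ) := by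
  rw [trace_sq, Complex.zero_le_real]
  exact Finset.sum_nonneg fun i _ => Finset.sum_nonneg fun j _ => Complex.normSq_nonneg _

lemma trace_zero' (d : ℕ) (B : Matrix (Fin d) (Fin d) ℂ) (h : trace (B * Bᴴ) = 0) : B = 0 := by
  rw [trace_sq, Complex.ofReal_eq_zero] at h
  ext i j
  have h1 : ∀ i ∈ Finset.univ, (0:ℝ) ≤ ∑ j, Complex.normSq (B i j) :=
    fun i _ => Finset.sum_nonneg fun j _ => Complex.normSq_nonneg _
  have h2 := (Finset.sum_eq_zero_iff_of_nonneg h1).mp h i (Finset.mem_univ i)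
  have h3 : ∀ j ∈ Finset.univ, (0:ℝ) ≤ Complex.normSq (B i j) := fun j _ => Complex.normSq_nonneg _
  have h4 := (Finset.sum_eq_zero_iff_of_nonneg h3).mp h2 j (Finset.mem_univ j)
  simpa using Complex.normSq_eq_zero.mp h4

lemma sqrt_isUnit_det (hρ : ρ.PosDef) : IsUnit hρ.posSemidef.sqrt.det := by
  have h1 : hρ.posSemidef.sqrt.det * hρ.posSemidef.sqrt.det = ρ.det := by
    rw [← Matrix.det_mul, hρ.posSemidef.sqrt_mul_self]
  have h2 : IsUnit ρ.det := (Matrix.isUnit_iff_isUnit_det ρ).mp hρ.isUnit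
  rw [← h1] at h2
  exact isUnit_of_mul_isUnit_left h2

lemma trace_rho_eq (hρ : ρ.PosDef) (D : Matrix (Fin d) (Fin d) ℂ) :
    trace (ρ * (Dᴴ * D)) = trace ((D * hρ.posSemidef.sqrt) * (D * hρ.posSemidef.sqrt)ᴴ) := by
  set s := hρ.posSemidef.sqrt with hs
  have hherm : sᴴ = s := hρ.posSemidef.sqrt_conjTranspose' 
  have hss : s * s = ρ := hρ.posSemidef.sqrt_mul_self
  rw [conjTranspose_mul, hherm, ← hss]
  rw [Matrix.trace_mul_comm]
  simp only [Matrix.mul_assoc]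
  rw [Matrix.trace_mul_comm]
  simp only [Matrix.mul_assoc]

lemma trace_rho_nonneg (hρ : ρ.PosDef) (D : Matrix (Fin d) (Fin d) ℂ) :
    0 ≤ trace (ρ * (Dᴴ * D)) := by
  rw [trace_rho_eq hρ]; exact trace_nonneg' _ _

lemma trace_rho_zero (hρ : ρ.PosDef) (D : Matrix (Fin d) (Fin d) ℂ)
    (h : trace (ρ * (Dᴴ * D)) = 0) : D = 0 := by
  rw [trace_rho_eq hρ] at h
  have h2 := trace_zero' _ _ h
  have h3 : D * hρ.posSemidef.sqrt * hρ.posSemidef.sqrt⁻¹ = 0 := by rw [h2]; simp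
  rwa [Matrix.mul_nonsing_inv_cancel_right _ _ (sqrt_isUnit_det hρ)] at h3
variable (M : Fin m → Matrix (Fin d) (Fin d) ℂ)

lemma trace_dual_mul (A B : Matrix (Fin d) (Fin d) ℂ) :
    trace ((∑ k, (M k)ᴴ * A * M k) * B) = trace (A * ∑ k, M k * B * (M k)ᴴ) := by
  rw [Finset.sum_mul, Matrix.mul_sum, trace_sum, trace_sum]
  refine Finset.sum_congr rfl fun k _ => ?_
  rw [Matrix.trace_mul_comm]
  simp only [Matrix.mul_assoc]
  rw [show B * ((M k)ᴴ * (A * M k)) = (B * (M k)ᴴ) * (A * M k) by simp [Matrix.mul_assoc],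
    Matrix.trace_mul_comm]
  simp only [Matrix.mul_assoc]

lemma expand_sum (Y Z : Matrix (Fin d) (Fin d) ℂ) :
    ∑ k, (Y * M k - M k * Z)ᴴ * (Y * M k - M k * Z)
      = (∑ k, (M k)ᴴ * (Yᴴ * Y) * M k) - (∑ k, (M k)ᴴ * Yᴴ * M k) * Z
        - Zᴴ * (∑ k, (M k)ᴴ * Y * M k) + Zᴴ * ((∑ k, (M k)ᴴ * M k) * Z) := by
  have h : ∀ k : Fin m, (Y * M k - M k * Z)ᴴ * (Y * M k - M k * Z)
      = (M k)ᴴ * (Yᴴ * Y) * M k - ((M k)ᴴ * Yᴴ * M k) * Z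
        - Zᴴ * ((M k)ᴴ * Y * M k) + Zᴴ * (((M k)ᴴ * M k) * Z) := by
    intro k
    simp only [conjTranspose_sub, conjTranspose_mul]
    noncomm_ring
  rw [Finset.sum_congr rfl fun k _ => h k]
  simp only [Finset.sum_sub_distrib, Finset.sum_add_distrib, ← Finset.sum_mul, ← Finset.mul_sum]

lemma fixdual_conjT (Y : Matrix (Fin d) (Fin d) ℂ)
    (hY : ∑ k, (M k)ᴴ * Y * M k = Y) : ∑ k, (M k)ᴴ * Yᴴ * M k = Yᴴ := by
  have := congrArg conjTranspose hY
  simpa [conjTranspose_sum, conjTranspose_mul, Matrix.mul_assoc] using this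


lemma trace_rho_dual (W : Matrix (Fin d) (Fin d) ℂ)
    (hfix' : ∑ k, M k * ρ * (M k)ᴴ = ρ) :
    trace (ρ * ∑ k, (M k)ᴴ * W * M k) = trace (ρ * W) := by
  rw [Matrix.trace_mul_comm ρ, trace_dual_mul M, hfix', Matrix.trace_mul_comm]

variable (hTP : ∑ k, (M k)ᴴ * M k = 1) (hρ : ρ.PosDef)
  (hfix : ∑ k, M k * ρ * (M k)ᴴ = ρ)
include hTP hρ hfix

lemma comm_of_fixdual (Y : Matrix (Fin d) (Fin d) ℂ)
    (hY : ∑ k, (M k)ᴴ * Y * M k = Y) : ∀ k, Y * M k = M k * Y := by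
  have hYc := fixdual_conjT M Y hY
  have hexp : ∑ k, (Y * M k - M k * Y)ᴴ * (Y * M k - M k * Y)
      = (∑ k, (M k)ᴴ * (Yᴴ * Y) * M k) - Yᴴ * Y := by
    rw [expand_sum M Y Y, hYc, hY, hTP]
    noncomm_ring
  have htr : trace (ρ * ∑ k, (Y * M k - M k * Y)ᴴ * (Y * M k - M k * Y)) = 0 := by
    rw [hexp, Matrix.mul_sub, trace_sub, Matrix.trace_mul_comm ρ, trace_dual_mul M, hfix,
      Matrix.trace_mul_comm]
    exact sub_self _
  intro k
  have hterm : ∀ j ∈ Finset.univ,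
      (0:ℂ) ≤ trace (ρ * ((Y * M j - M j * Y)ᴴ * (Y * M j - M j * Y))) :=
    fun j _ => trace_rho_nonneg hρ _
  have hsum0 : ∑ j, trace (ρ * ((Y * M j - M j * Y)ᴴ * (Y * M j - M j * Y))) = 0 := by
    rw [← trace_sum, ← Matrix.mul_sum]
    exact htr
  have h0 := (Finset.sum_eq_zero_iff_of_nonneg hterm).mp hsum0 k (Finset.mem_univ k)
  exact sub_eq_zero.mp (trace_rho_zero hρ _ h0)

lemma fixYρ_of_fixdual (Y : Matrix (Fin d) (Fin d) ℂ)
    (hY : ∑ k, (M k)ᴴ * Y * M k = Y) :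
    ∑ k, M k * (Y * ρ) * (M k)ᴴ = Y * ρ := by
  have h1 := comm_of_fixdual M hTP hρ hfix Y hY
  calc ∑ k, M k * (Y * ρ) * (M k)ᴴ = ∑ k, Y * (M k * ρ * (M k)ᴴ) := by
        refine Finset.sum_congr rfl fun k _ => ?_
        rw [show M k * (Y * ρ) * (M k)ᴴ = (M k * Y) * (ρ * (M k)ᴴ) by
          simp [Matrix.mul_assoc], ← h1]
        simp [Matrix.mul_assoc]
    _ = Y * ρ := by rw [← Matrix.mul_sum, hfix]

lemma fixρY_of_fixdual (Y : Matrix (Fin d) (Fin d) ℂ)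
    (hY : ∑ k, (M k)ᴴ * Y * M k = Y) :
    ∑ k, M k * (ρ * Y) * (M k)ᴴ = ρ * Y := by
  have h1 := comm_of_fixdual M hTP hρ hfix Yᴴ (fixdual_conjT M Y hY)
  have h2 : ∀ k, (M k)ᴴ * Y = Y * (M k)ᴴ := by
    intro k
    have := congrArg conjTranspose (h1 k)
    simpa [conjTranspose_mul] using this
  calc ∑ k, M k * (ρ * Y) * (M k)ᴴ = ∑ k, (M k * ρ * (M k)ᴴ) * Y := by
        refine Finset.sum_congr rfl fun k _ => ?_
        rw [show M k * (ρ * Y) * (M k)ᴴ = M k * ρ * (Y * (M k)ᴴ) by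
          simp [Matrix.mul_assoc], ← h2]
        simp [Matrix.mul_assoc]
    _ = ρ * Y := by rw [← Finset.sum_mul, hfix]

lemma fixdual_of_fixYρ (Y : Matrix (Fin d) (Fin d) ℂ)
    (hE : ∑ k, M k * (Y * ρ) * (M k)ᴴ = Y * ρ) :
    ∑ k, (M k)ᴴ * Y * M k = Y := by
  set Z := ∑ k, (M k)ᴴ * Y * M k with hZ
  have hZc : ∑ k, (M k)ᴴ * Yᴴ * M k = Zᴴ := by
    rw [hZ]
    simp [conjTranspose_sum, conjTranspose_mul, Matrix.mul_assoc]
  have hEc : ∑ k, M k * (ρ * Yᴴ) * (M k)ᴴ = ρ * Yᴴ := by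
    have := congrArg conjTranspose hE
    simpa [conjTranspose_sum, conjTranspose_mul, hρ.isHermitian.eq, Matrix.mul_assoc] using this
  have a1 : trace (ρ * (Zᴴ * Y)) = trace (ρ * (Yᴴ * Y)) :=
    calc trace (ρ * (Zᴴ * Y)) = trace (Zᴴ * (Y * ρ)) := by
          rw [Matrix.trace_mul_comm]; simp only [Matrix.mul_assoc]
      _ = trace (Yᴴ * (Y * ρ)) := by rw [← hZc, trace_dual_mul M, hE]
      _ = trace (ρ * (Yᴴ * Y)) := by
          rw [← Matrix.mul_assoc, Matrix.trace_mul_cycle, Matrix.mul_assoc]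
  have a2 : trace (ρ * (Yᴴ * Z)) = trace (ρ * (Yᴴ * Y)) :=
    calc trace (ρ * (Yᴴ * Z)) = trace (Z * (ρ * Yᴴ)) := by
          rw [← Matrix.mul_assoc, Matrix.trace_mul_cycle, Matrix.mul_assoc]
      _ = trace (Y * (ρ * Yᴴ)) := by rw [hZ, trace_dual_mul M, hEc]
      _ = trace (ρ * (Yᴴ * Y)) := by
          rw [Matrix.trace_mul_comm]; simp only [Matrix.mul_assoc]
  have a3 : trace (ρ * (Zᴴ * Z)) ≤ trace (ρ * (Yᴴ * Y)) := by
    have hexp : ∑ k, (Y * M k - M k * Z)ᴴ * (Y * M k - M k * Z)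
        = (∑ k, (M k)ᴴ * (Yᴴ * Y) * M k) - Zᴴ * Z := by
      rw [expand_sum M Y Z, hZc, ← hZ, hTP]
      noncomm_ring
    have hnn : (0:ℂ) ≤ trace (ρ * ∑ k, (Y * M k - M k * Z)ᴴ * (Y * M k - M k * Z)) := by
      rw [Matrix.mul_sum, trace_sum]
      exact Finset.sum_nonneg fun j _ => trace_rho_nonneg hρ _
    rw [hexp, Matrix.mul_sub, trace_sub, sub_nonneg] at hnn
    rwa [trace_rho_dual M _ hfix] at hnn
  have key : trace (ρ * ((Z - Y)ᴴ * (Z - Y))) = 0 := by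
    have hexp2 : ρ * ((Z - Y)ᴴ * (Z - Y))
        = ρ * (Zᴴ * Z) - ρ * (Zᴴ * Y) - ρ * (Yᴴ * Z) + ρ * (Yᴴ * Y) := by
      simp only [conjTranspose_sub]
      noncomm_ring
    have hle : trace (ρ * ((Z - Y)ᴴ * (Z - Y))) ≤ 0 := by
      rw [hexp2, trace_add, trace_sub, trace_sub, a1, a2]
      have : trace (ρ * (Zᴴ * Z)) - trace (ρ * (Yᴴ * Y)) ≤ 0 := sub_nonpos.mpr a3
      calc trace (ρ * (Zᴴ * Z)) - trace (ρ * (Yᴴ * Y)) - trace (ρ * (Yᴴ * Y))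
            + trace (ρ * (Yᴴ * Y)) = trace (ρ * (Zᴴ * Z)) - trace (ρ * (Yᴴ * Y)) := by ring
        _ ≤ 0 := this
    exact le_antisymm hle (trace_rho_nonneg hρ _)
  exact sub_eq_zero.mp (trace_rho_zero hρ _ key)

lemma fixdual_of_fixρY (Y : Matrix (Fin d) (Fin d) ℂ)
    (hE : ∑ k, M k * (ρ * Y) * (M k)ᴴ = ρ * Y) :
    ∑ k, (M k)ᴴ * Y * M k = Y := by
  have hEc : ∑ k, M k * (Yᴴ * ρ) * (M k)ᴴ = Yᴴ * ρ := by
    have := congrArg conjTranspose hE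
    simpa [conjTranspose_sum, conjTranspose_mul, hρ.isHermitian.eq, Matrix.mul_assoc] using this
  have h := fixdual_of_fixYρ M hTP hρ hfix Yᴴ hEc
  have := congrArg conjTranspose h
  simpa [conjTranspose_sum, conjTranspose_mul, Matrix.mul_assoc] using this

end Analytic

section Spectral
variable {d : ℕ}

lemma diag_inv_eq {d : ℕ} (g : Fin d → ℂ) (hg : ∀ i, g i ≠ 0) :
    (diagonal g)⁻¹ = diagonal (fun i => (g i)⁻¹) := by
  apply Matrix.inv_eq_right_inv
  rw [diagonal_mul_diagonal]
  have h1 : (fun i => g i * (g i)⁻¹) = fun _ => (1 : ℂ) :=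
    funext fun i => mul_inv_cancel₀ (hg i)
  rw [h1]
  exact Matrix.diagonal_one

lemma diag_conj_poly {d : ℕ} (f g : Fin d → ℂ)
    (hf : ∀ i, f i ≠ 0) (hg : ∀ i, g i ≠ 0)
    (hcompat : ∀ i j k l : Fin d, f i / f j = f k / f l → g i / g j = g k / g l) :
    ∃ (N : ℕ) (c : ℕ → ℂ), ∀ W : Matrix (Fin d) (Fin d) ℂ,
      diagonal g * W * (diagonal g)⁻¹ =
        ∑ n ∈ Finset.range N, c n • (diagonal f ^ n * W * ((diagonal f)⁻¹) ^ n) := by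
  classical
  set T : Finset ℂ := Finset.image (fun p : Fin d × Fin d => f p.1 / f p.2) Finset.univ with hT
  set r : ℂ → ℂ := fun z =>
    if h : ∃ q : Fin d × Fin d, f q.1 / f q.2 = z then g h.choose.1 / g h.choose.2 else 0 with hr
  have hrval : ∀ i j : Fin d, r (f i / f j) = g i / g j := by
    intro i j
    have hex : ∃ q : Fin d × Fin d, f q.1 / f q.2 = f i / f j := ⟨(i, j), rfl⟩
    rw [hr]
    simp only
    rw [dif_pos hex]
    exact hcompat _ _ _ _ hex.choose_spec
  set p : Polynomial ℂ := Lagrange.interpolate T id r with hp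
  have hpeval : ∀ i j : Fin d, p.eval (f i / f j) = g i / g j := by
    intro i j
    have hmem : f i / f j ∈ T := Finset.mem_image.mpr ⟨(i, j), Finset.mem_univ _, rfl⟩
    have h2 := Lagrange.eval_interpolate_at_node (v := id) (r := r) (Set.injOn_id _) hmem
    rw [hp]
    simpa [hrval i j] using h2
  refine ⟨p.natDegree + 1, fun n => p.coeff n, fun W => ?_⟩
  ext i j
  have hL : (diagonal g * W * (diagonal g)⁻¹) i j = g i * W i j * (g j)⁻¹ := by
    rw [diag_inv_eq g hg, Matrix.mul_diagonal, Matrix.diagonal_mul]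
  rw [hL]
  have hR : (∑ n ∈ Finset.range (p.natDegree + 1),
        p.coeff n • (diagonal f ^ n * W * ((diagonal f)⁻¹) ^ n)) i j
      = ∑ n ∈ Finset.range (p.natDegree + 1),
        p.coeff n * ((f i) ^ n * W i j * ((f j)⁻¹) ^ n) := by
    rw [Matrix.sum_apply]
    refine Finset.sum_congr rfl fun n _ => ?_
    rw [Matrix.smul_apply, diag_inv_eq f hf, Matrix.diagonal_pow, Matrix.diagonal_pow,
      Matrix.mul_diagonal, Matrix.diagonal_mul]
    simp [Pi.pow_apply, smul_eq_mul]
  rw [hR]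
  have hsum : ∑ n ∈ Finset.range (p.natDegree + 1),
        p.coeff n * ((f i) ^ n * W i j * ((f j)⁻¹) ^ n)
      = (∑ n ∈ Finset.range (p.natDegree + 1), p.coeff n * (f i / f j) ^ n) * W i j := by
    rw [Finset.sum_mul]
    refine Finset.sum_congr rfl fun n _ => ?_
    rw [div_pow, div_eq_mul_inv, inv_pow]
    ring
  rw [hsum, ← Polynomial.eval_eq_sum_range, hpeval]
  rw [div_eq_mul_inv]
  ring


lemma conj_pieces (U A B : Matrix (Fin d) (Fin d) ℂ) (hU' : star U * U = 1) :
    (U * A * star U) * (U * B * star U) = U * (A * B) * star U := by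
  have h : ∀ X : Matrix (Fin d) (Fin d) ℂ, star U * (U * X) = X := fun X => by
    rw [← Matrix.mul_assoc, hU', Matrix.one_mul]
  simp only [Matrix.mul_assoc, h]

lemma conj_inv' (U A B : Matrix (Fin d) (Fin d) ℂ) (hU : U * star U = 1)
    (hU' : star U * U = 1) (hAB : A * B = 1) :
    (U * A * star U)⁻¹ = U * B * star U := by
  apply Matrix.inv_eq_right_inv
  rw [conj_pieces U A B hU', hAB, Matrix.mul_one, hU]

lemma conj_pow' (U A : Matrix (Fin d) (Fin d) ℂ) (hU : U * star U = 1)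
    (hU' : star U * U = 1) (n : ℕ) :
    (U * A * star U) ^ n = U * A ^ n * star U := by
  induction n with
  | zero => simp [pow_zero, hU]
  | succ n ih => rw [pow_succ, ih, conj_pieces U _ _ hU', ← pow_succ]

lemma compat_sqrt (lam : Fin d → ℝ) (hpos : ∀ i, 0 < lam i) :
    ∀ i j k l : Fin d,
      ((lam i : ℂ)) / (lam j : ℂ) = (lam k : ℂ) / (lam l : ℂ) →
      ((Real.sqrt (lam i) : ℂ)) / (Real.sqrt (lam j) : ℂ)
        = (Real.sqrt (lam k) : ℂ) / (Real.sqrt (lam l) : ℂ) := by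
  intro i j k l h
  rw [← Complex.ofReal_div, ← Complex.ofReal_div] at h ⊢
  rw [Complex.ofReal_inj] at h
  rw [Complex.ofReal_inj]
  rw [← Real.sqrt_div (le_of_lt (hpos i)), ← Real.sqrt_div (le_of_lt (hpos k)), h]

lemma conj_sandwich_sum (U A B P Q : Matrix (Fin d) (Fin d) ℂ)
    (hU1 : U * star U = 1) (hU2 : star U * U = 1) (N : ℕ) (c : ℕ → ℂ)
    (h : ∀ W, A * W * B = ∑ n ∈ Finset.range N, c n • (P ^ n * W * Q ^ n)) (Y) :
    (U * A * star U) * Y * (U * B * star U)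
      = ∑ n ∈ Finset.range N, c n • ((U * P * star U) ^ n * Y * ((U * Q * star U)) ^ n) := by
  have hY : U * (star U * Y * U) * star U = Y := by
    have h1 : ∀ X : Matrix (Fin d) (Fin d) ℂ, U * (star U * X) = X := fun X => by
      rw [← Matrix.mul_assoc, hU1, Matrix.one_mul]
    simp only [Matrix.mul_assoc, h1]
    rw [hU1, Matrix.mul_one]
  set W := star U * Y * U with hW
  calc (U * A * star U) * Y * (U * B * star U)
      = (U * A * star U) * (U * W * star U) * (U * B * star U) := by rw [hY]
    _ = U * (A * W * B) * star U := by
        rw [conj_pieces U _ _ hU2, conj_pieces U _ _ hU2]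
    _ = U * (∑ n ∈ Finset.range N, c n • (P ^ n * W * Q ^ n)) * star U := by rw [h W]
    _ = ∑ n ∈ Finset.range N, c n • (U * (P ^ n * W * Q ^ n) * star U) := by
        rw [Matrix.mul_sum, Finset.sum_mul]
        refine Finset.sum_congr rfl fun n _ => ?_
        rw [Matrix.mul_smul, Matrix.smul_mul]
    _ = ∑ n ∈ Finset.range N, c n • ((U * P * star U) ^ n * Y * ((U * Q * star U)) ^ n) := by
        refine Finset.sum_congr rfl fun n _ => ?_
        rw [conj_pow' U P hU1 hU2, conj_pow' U Q hU1 hU2, ← hY,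
          conj_pieces U _ _ hU2, conj_pieces U _ _ hU2]

lemma sqrt_conj_left {ρ : Matrix (Fin d) (Fin d) ℂ} (hρ : ρ.PosDef) :
    ∃ (N : ℕ) (c : ℕ → ℂ), ∀ Y : Matrix (Fin d) (Fin d) ℂ,
      hρ.posSemidef.sqrt * Y * hρ.posSemidef.sqrt⁻¹ =
        ∑ n ∈ Finset.range N, c n • (ρ ^ n * Y * (ρ⁻¹) ^ n) := by
  set hH : ρ.IsHermitian := hρ.1 with hHdef
  set U : Matrix (Fin d) (Fin d) ℂ := (hH.eigenvectorUnitary : Matrix (Fin d) (Fin d) ℂ) with hUdef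
  set lam : Fin d → ℝ := hH.eigenvalues with hlam
  have hU1 : U * star U = 1 := (Matrix.mem_unitaryGroup_iff).mp hH.eigenvectorUnitary.2
  have hU2 : star U * U = 1 := (Matrix.mem_unitaryGroup_iff').mp hH.eigenvectorUnitary.2
  have hpos : ∀ i, 0 < lam i := fun i => hρ.eigenvalues_pos i
  set f : Fin d → ℂ := fun i => (lam i : ℂ) with hfdef
  set g : Fin d → ℂ := fun i => ((Real.sqrt (lam i)) : ℂ) with hgdef
  have hf : ∀ i, f i ≠ 0 := fun i => Complex.ofReal_ne_zero.mpr (ne_of_gt (hpos i))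
  have hg : ∀ i, g i ≠ 0 := fun i =>
    Complex.ofReal_ne_zero.mpr (ne_of_gt (Real.sqrt_pos.mpr (hpos i)))
  have hspec : ρ = U * diagonal f * star U := by
    have h := hH.spectral_theorem; rw [Unitary.conjStarAlgAut_apply] at h; exact h
  have hsqrt : hρ.posSemidef.sqrt = U * diagonal g * star U := rfl
  have hDDi : diagonal f * diagonal (fun i => (f i)⁻¹) = 1 := by
    rw [diagonal_mul_diagonal]
    have h1 : (fun i => f i * (f i)⁻¹) = fun _ => (1 : ℂ) :=
      funext fun i => mul_inv_cancel₀ (hf i)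
    rw [h1]; exact Matrix.diagonal_one
  have hSSi : diagonal g * diagonal (fun i => (g i)⁻¹) = 1 := by
    rw [diagonal_mul_diagonal]
    have h1 : (fun i => g i * (g i)⁻¹) = fun _ => (1 : ℂ) :=
      funext fun i => mul_inv_cancel₀ (hg i)
    rw [h1]; exact Matrix.diagonal_one
  have hρinv : ρ⁻¹ = U * diagonal (fun i => (f i)⁻¹) * star U := by
    rw [hspec]; exact conj_inv' U _ _ hU1 hU2 hDDi
  have hsinv : hρ.posSemidef.sqrt⁻¹ = U * diagonal (fun i => (g i)⁻¹) * star U := by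
    rw [hsqrt]; exact conj_inv' U _ _ hU1 hU2 hSSi
  obtain ⟨N, c, hc⟩ := diag_conj_poly f g hf hg (compat_sqrt lam hpos)
  refine ⟨N, c, fun Y => ?_⟩
  have hc' : ∀ W, diagonal g * W * diagonal (fun i => (g i)⁻¹)
      = ∑ n ∈ Finset.range N, c n • (diagonal f ^ n * W * (diagonal (fun i => (f i)⁻¹)) ^ n) := by
    intro W
    have := hc W
    rwa [diag_inv_eq g hg, diag_inv_eq f hf] at this
  have := conj_sandwich_sum U (diagonal g) (diagonal (fun i => (g i)⁻¹))
    (diagonal f) (diagonal (fun i => (f i)⁻¹)) hU1 hU2 N c hc' Y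
  rw [hsinv, hsqrt, hρinv, hspec]
  exact this

lemma sqrt_conj_right {ρ : Matrix (Fin d) (Fin d) ℂ} (hρ : ρ.PosDef) :
    ∃ (N : ℕ) (c : ℕ → ℂ), ∀ Y : Matrix (Fin d) (Fin d) ℂ,
      hρ.posSemidef.sqrt⁻¹ * Y * hρ.posSemidef.sqrt =
        ∑ n ∈ Finset.range N, c n • ((ρ⁻¹) ^ n * Y * ρ ^ n) := by
  set hH : ρ.IsHermitian := hρ.1 with hHdef
  set U : Matrix (Fin d) (Fin d) ℂ := (hH.eigenvectorUnitary : Matrix (Fin d) (Fin d) ℂ) with hUdef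
  set lam : Fin d → ℝ := hH.eigenvalues with hlam
  have hU1 : U * star U = 1 := (Matrix.mem_unitaryGroup_iff).mp hH.eigenvectorUnitary.2
  have hU2 : star U * U = 1 := (Matrix.mem_unitaryGroup_iff').mp hH.eigenvectorUnitary.2
  have hpos : ∀ i, 0 < lam i := fun i => hρ.eigenvalues_pos i
  set f : Fin d → ℂ := fun i => (lam i : ℂ) with hfdef
  set g : Fin d → ℂ := fun i => ((Real.sqrt (lam i)) : ℂ) with hgdef
  have hf : ∀ i, f i ≠ 0 := fun i => Complex.ofReal_ne_zero.mpr (ne_of_gt (hpos i))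
  have hg : ∀ i, g i ≠ 0 := fun i =>
    Complex.ofReal_ne_zero.mpr (ne_of_gt (Real.sqrt_pos.mpr (hpos i)))
  have hf' : ∀ i, (f i)⁻¹ ≠ 0 := fun i => inv_ne_zero (hf i)
  have hg' : ∀ i, (g i)⁻¹ ≠ 0 := fun i => inv_ne_zero (hg i)
  have hspec : ρ = U * diagonal f * star U := by
    have h := hH.spectral_theorem; rw [Unitary.conjStarAlgAut_apply] at h; exact h
  have hsqrt : hρ.posSemidef.sqrt = U * diagonal g * star U := rfl
  have hDDi : diagonal f * diagonal (fun i => (f i)⁻¹) = 1 := by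
    rw [diagonal_mul_diagonal]
    have h1 : (fun i => f i * (f i)⁻¹) = fun _ => (1 : ℂ) :=
      funext fun i => mul_inv_cancel₀ (hf i)
    rw [h1]; exact Matrix.diagonal_one
  have hSSi : diagonal g * diagonal (fun i => (g i)⁻¹) = 1 := by
    rw [diagonal_mul_diagonal]
    have h1 : (fun i => g i * (g i)⁻¹) = fun _ => (1 : ℂ) :=
      funext fun i => mul_inv_cancel₀ (hg i)
    rw [h1]; exact Matrix.diagonal_one
  have hρinv : ρ⁻¹ = U * diagonal (fun i => (f i)⁻¹) * star U := by
    rw [hspec]; exact conj_inv' U _ _ hU1 hU2 hDDi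
  have hsinv : hρ.posSemidef.sqrt⁻¹ = U * diagonal (fun i => (g i)⁻¹) * star U := by
    rw [hsqrt]; exact conj_inv' U _ _ hU1 hU2 hSSi
  -- compat for the inverted families
  have hcompat' : ∀ i j k l : Fin d,
      (f i)⁻¹ / (f j)⁻¹ = (f k)⁻¹ / (f l)⁻¹ → (g i)⁻¹ / (g j)⁻¹ = (g k)⁻¹ / (g l)⁻¹ := by
    intro i j k l h
    rw [inv_div_inv, inv_div_inv] at h
    rw [inv_div_inv, inv_div_inv]
    exact compat_sqrt lam hpos j i l k h
  obtain ⟨N, c, hc⟩ := diag_conj_poly (fun i => (f i)⁻¹) (fun i => (g i)⁻¹) hf' hg' hcompat'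
  refine ⟨N, c, fun Y => ?_⟩
  have hinvinv_f : (diagonal fun i => (f i)⁻¹)⁻¹ = diagonal f := by
    rw [diag_inv_eq _ hf']
    have h1 : (fun i => (f i)⁻¹⁻¹) = f := funext fun i => inv_inv (f i)
    rw [h1]
  have hinvinv_g : (diagonal fun i => (g i)⁻¹)⁻¹ = diagonal g := by
    rw [diag_inv_eq _ hg']
    have h1 : (fun i => (g i)⁻¹⁻¹) = g := funext fun i => inv_inv (g i)
    rw [h1]
  have hc' : ∀ W, diagonal (fun i => (g i)⁻¹) * W * diagonal g
      = ∑ n ∈ Finset.range N, c n • ((diagonal fun i => (f i)⁻¹) ^ n * W * (diagonal f) ^ n) := by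
    intro W
    have := hc W
    rwa [hinvinv_f, hinvinv_g] at this
  have := conj_sandwich_sum U (diagonal fun i => (g i)⁻¹) (diagonal g)
    (diagonal fun i => (f i)⁻¹) (diagonal f) hU1 hU2 N c hc' Y
  rw [hsinv, hsqrt, hρinv, hspec]
  exact this

end Spectral

variable {d m : ℕ}

lemma fixdual_sum (M : Fin m → Matrix (Fin d) (Fin d) ℂ) {N : ℕ} {c : ℕ → ℂ}
    {T : ℕ → Matrix (Fin d) (Fin d) ℂ}
    (hT : ∀ n ∈ Finset.range N, ∑ k, (M k)ᴴ * T n * M k = T n) :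
    ∑ k, (M k)ᴴ * (∑ n ∈ Finset.range N, c n • T n) * M k
      = ∑ n ∈ Finset.range N, c n • T n := by
  calc ∑ k, (M k)ᴴ * (∑ n ∈ Finset.range N, c n • T n) * M k
      = ∑ k, ∑ n ∈ Finset.range N, c n • ((M k)ᴴ * T n * M k) := by
        refine Finset.sum_congr rfl fun k _ => ?_
        rw [Matrix.mul_sum, Finset.sum_mul]
        refine Finset.sum_congr rfl fun n _ => ?_
        rw [Matrix.mul_smul, Matrix.smul_mul]
    _ = ∑ n ∈ Finset.range N, ∑ k, c n • ((M k)ᴴ * T n * M k) := Finset.sum_comm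
    _ = ∑ n ∈ Finset.range N, c n • T n := by
        refine Finset.sum_congr rfl fun n hn => ?_
        rw [← Finset.smul_sum, hT n hn]

section Invariance

variable (M : Fin m → Matrix (Fin d) (Fin d) ℂ) {ρ : Matrix (Fin d) (Fin d) ℂ}
variable (hTP : ∑ k, (M k)ᴴ * M k = 1) (hρ : ρ.PosDef)
  (hfix : ∑ k, M k * ρ * (M k)ᴴ = ρ)
include hTP hρ hfix

lemma fixdual_adRho (Y : Matrix (Fin d) (Fin d) ℂ)
    (hY : ∑ k, (M k)ᴴ * Y * M k = Y) :
    ∑ k, (M k)ᴴ * (ρ * Y * ρ⁻¹) * M k = ρ * Y * ρ⁻¹ := by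
  have hρdet : IsUnit ρ.det := (Matrix.isUnit_iff_isUnit_det ρ).mp hρ.isUnit
  have h2 := fixρY_of_fixdual M hTP hρ hfix Y hY
  have hWρ : (ρ * Y * ρ⁻¹) * ρ = ρ * Y := Matrix.nonsing_inv_mul_cancel_right ρ (ρ * Y) hρdet
  refine fixdual_of_fixYρ M hTP hρ hfix (ρ * Y * ρ⁻¹) ?_
  rw [hWρ]
  exact h2

lemma fixdual_adRhoInv (Y : Matrix (Fin d) (Fin d) ℂ)
    (hY : ∑ k, (M k)ᴴ * Y * M k = Y) :
    ∑ k, (M k)ᴴ * (ρ⁻¹ * Y * ρ) * M k = ρ⁻¹ * Y * ρ := by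
  have hρdet : IsUnit ρ.det := (Matrix.isUnit_iff_isUnit_det ρ).mp hρ.isUnit
  have h1 := fixYρ_of_fixdual M hTP hρ hfix Y hY
  have hρZ : ρ * (ρ⁻¹ * Y * ρ) = Y * ρ := by
    rw [← Matrix.mul_assoc, ← Matrix.mul_assoc, Matrix.mul_nonsing_inv ρ hρdet, Matrix.one_mul]
  refine fixdual_of_fixρY M hTP hρ hfix (ρ⁻¹ * Y * ρ) ?_
  rw [hρZ]
  exact h1

lemma fixdual_adRho_pow (n : ℕ) (Y : Matrix (Fin d) (Fin d) ℂ)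
    (hY : ∑ k, (M k)ᴴ * Y * M k = Y) :
    ∑ k, (M k)ᴴ * (ρ ^ n * Y * (ρ⁻¹) ^ n) * M k = ρ ^ n * Y * (ρ⁻¹) ^ n := by
  induction n with
  | zero => simpa using hY
  | succ n ih =>
      have harr : ρ ^ (n + 1) * Y * (ρ⁻¹) ^ (n + 1)
          = ρ * (ρ ^ n * Y * (ρ⁻¹) ^ n) * ρ⁻¹ := by
        rw [pow_succ', pow_succ]
        simp only [Matrix.mul_assoc]
      rw [harr]
      exact fixdual_adRho M hTP hρ hfix _ ih

lemma fixdual_adRhoInv_pow (n : ℕ) (Y : Matrix (Fin d) (Fin d) ℂ)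
    (hY : ∑ k, (M k)ᴴ * Y * M k = Y) :
    ∑ k, (M k)ᴴ * ((ρ⁻¹) ^ n * Y * ρ ^ n) * M k = (ρ⁻¹) ^ n * Y * ρ ^ n := by
  induction n with
  | zero => simpa using hY
  | succ n ih =>
      have harr : (ρ⁻¹) ^ (n + 1) * Y * ρ ^ (n + 1)
          = ρ⁻¹ * ((ρ⁻¹) ^ n * Y * ρ ^ n) * ρ := by
        rw [pow_succ', pow_succ]
        simp only [Matrix.mul_assoc]
      rw [harr]
      exact fixdual_adRhoInv M hTP hρ hfix _ ih

lemma fixdual_sqrt_conj (Y : Matrix (Fin d) (Fin d) ℂ)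
    (hY : ∑ k, (M k)ᴴ * Y * M k = Y) :
    ∑ k, (M k)ᴴ * (hρ.posSemidef.sqrt * Y * hρ.posSemidef.sqrt⁻¹) * M k
      = hρ.posSemidef.sqrt * Y * hρ.posSemidef.sqrt⁻¹ := by
  obtain ⟨N, c, hpoly⟩ := sqrt_conj_left hρ
  rw [hpoly Y]
  exact fixdual_sum M fun n _ => fixdual_adRho_pow M hTP hρ hfix n Y hY

lemma fixdual_sqrtInv_conj (Y : Matrix (Fin d) (Fin d) ℂ)
    (hY : ∑ k, (M k)ᴴ * Y * M k = Y) :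
    ∑ k, (M k)ᴴ * (hρ.posSemidef.sqrt⁻¹ * Y * hρ.posSemidef.sqrt) * M k
      = hρ.posSemidef.sqrt⁻¹ * Y * hρ.posSemidef.sqrt := by
  obtain ⟨N, c, hpoly⟩ := sqrt_conj_right hρ
  rw [hpoly Y]
  exact fixdual_sum M fun n _ => fixdual_adRhoInv_pow M hTP hρ hfix n Y hY

end Invariance

/-- For a CPTP map `E` (with Kraus operators `M k`) admitting a positive-definite fixed
density matrix `ρ`, the fixed-point set of `E` is `ρ^{1/2} · fix(E†) · ρ^{1/2}`, where
`E†(X) = ∑ k, (M k)ᴴ X (M k)` is the Hilbert–Schmidt dual of `E`. -/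
theorem fix_eq_sqrt_fixDual_sqrt {d m : ℕ}
    (E : Matrix (Fin d) (Fin d) ℂ → Matrix (Fin d) (Fin d) ℂ)
    (M : Fin m → Matrix (Fin d) (Fin d) ℂ)
    (hKraus : ∀ X, E X = ∑ k, M k * X * (M k)ᴴ)
    (hTP : ∑ k, (M k)ᴴ * M k = 1)
    (ρ : Matrix (Fin d) (Fin d) ℂ) (hρ : ρ.PosDef) (hρtr : ρ.trace = 1)
    (hfix : E ρ = ρ) :
    ∀ X, E X = X ↔
      ∃ Y, (∑ k, (M k)ᴴ * Y * M k) = Y ∧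
        X = hρ.posSemidef.sqrt * Y * hρ.posSemidef.sqrt := by
  have hfix' : ∑ k, M k * ρ * (M k)ᴴ = ρ := (hKraus ρ).symm.trans hfix
  have hρdet : IsUnit ρ.det := (Matrix.isUnit_iff_isUnit_det ρ).mp hρ.isUnit
  set s : Matrix (Fin d) (Fin d) ℂ := hρ.posSemidef.sqrt with hsdef
  have hdet : IsUnit s.det := sqrt_isUnit_det hρ
  have hss : s * s = ρ := hρ.posSemidef.sqrt_mul_self
  intro X
  constructor
  · intro hX
    have hX' : ∑ k, M k * X * (M k)ᴴ = X := (hKraus X).symm.trans hX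
    have hY0ρ : (X * ρ⁻¹) * ρ = X := Matrix.nonsing_inv_mul_cancel_right ρ X hρdet
    have h1 : ∑ k, (M k)ᴴ * (X * ρ⁻¹) * M k = X * ρ⁻¹ := by
      refine fixdual_of_fixYρ M hTP hρ hfix' (X * ρ⁻¹) ?_
      rw [hY0ρ]
      exact hX'
    have h2 := fixdual_sqrtInv_conj M hTP hρ hfix' (X * ρ⁻¹) h1
    refine ⟨s⁻¹ * (X * ρ⁻¹) * s, h2, ?_⟩
    have hcalc : s * (s⁻¹ * (X * ρ⁻¹) * s) * s = ((s * s⁻¹) * (X * ρ⁻¹)) * (s * s) := by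
      simp only [Matrix.mul_assoc]
    rw [hcalc, Matrix.mul_nonsing_inv s hdet, Matrix.one_mul, hss, hY0ρ]
  · rintro ⟨Y, hY, rfl⟩
    rw [hKraus]
    have hZ := fixdual_sqrt_conj M hTP hρ hfix' Y hY
    have h3 := fixYρ_of_fixdual M hTP hρ hfix' _ hZ
    have h4 : s⁻¹ * (s * s) = s := by
      rw [← Matrix.mul_assoc, Matrix.nonsing_inv_mul s hdet, Matrix.one_mul]
    have he : (s * Y * s⁻¹) * ρ = s * Y * s := by
      calc (s * Y * s⁻¹) * ρ = s * (Y * (s⁻¹ * (s * s))) := by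
            rw [← hss]; simp only [Matrix.mul_assoc]
        _ = s * Y * s := by rw [h4, ← Matrix.mul_assoc]
    rw [← he]
    rw [he] at h3
    rw [← he] at h3
    exact h3
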